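/- For every λ > 0 and every t ≥ 0, the family l ↦ (e^{λ·2^l} + e^{-t·2^l})/(1 + e^{λ·2^l}) indexed by l ∈ ℤ is multipliable, and its infinite product equals λ/(λ + t). (Equivalently, the Laplace transform of the binary expansion Σ 2^l A_l with independent Bernoulli digits A_l of parameters a_l = 1/(1+e^{λ·2^l}) equals the Laplace transform λ/(λ+t) of the exponential distribution with rate λ; note that 1 - a_l + a_l·e^{-t·2^l} = (e^{λ·2^l} + e^{-t·2^l})/(1 + e^{λ·2^l}).) -/

import Mathlib

open Real Filter Topology

private lemma slope_lim (c : ℝ) :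
    Filter.Tendsto (fun x : ℝ => (1 - Real.exp (-c * x)) / x) (nhdsWithin 0 {(0:ℝ)}ᶜ)
      (nhds c) := by
  have hder : HasDerivAt (fun x : ℝ => 1 - Real.exp (-c * x)) c 0 := by
    have h1 : HasDerivAt (fun x : ℝ => -c * x) (-c) 0 := by
      simpa using (hasDerivAt_id (0:ℝ)).const_mul (-c)
    have h2 := h1.exp
    have h3 := h2.const_sub 1
    rw [show -(Real.exp (-c * 0) * -c) = c by simp] at h3
    exact h3
  have h := hasDerivAt_iff_tendsto_slope.mp hder
  refine h.congr' ?_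
  filter_upwards [self_mem_nhdsWithin] with x hx
  simp only [slope_def_field, mul_zero, Real.exp_zero]
  norm_num

private lemma tele_hasSum (F : ℕ → ℝ) (L : ℝ) (hmono : ∀ n, F n ≤ F (n + 1))
    (hlim : Filter.Tendsto F Filter.atTop (nhds L)) :
    HasSum (fun n => F (n + 1) - F n) (L - F 0) := by
  rw [hasSum_iff_tendsto_nat_of_nonneg (fun n => sub_nonneg.2 (hmono n))]
  simpa [Finset.sum_range_sub (f := F)] using hlim.sub_const (F 0)

set_option maxHeartbeats 1600000 in
theorem laplace_transform_binary_expansion (lam t : ℝ) (hlam : 0 < lam) (ht : 0 ≤ t) :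
    Multipliable (fun l : ℤ =>
        (Real.exp (lam * 2 ^ l) + Real.exp (-t * 2 ^ l)) / (1 + Real.exp (lam * 2 ^ l))) ∧
      ∏' l : ℤ,
          (Real.exp (lam * 2 ^ l) + Real.exp (-t * 2 ^ l)) / (1 + Real.exp (lam * 2 ^ l)) =
        lam / (lam + t) := by
  set s := lam + t with hs
  have hspos : 0 < s := by positivity
  have hx : ∀ l : ℤ, (0:ℝ) < 2 ^ l := fun l => zpow_pos two_pos l
  have hden : ∀ (c : ℝ), 0 < c → ∀ l : ℤ, 0 < 1 - Real.exp (-c * 2 ^ l) := by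
    intro c hc l
    have : Real.exp (-c * 2 ^ l) < 1 := by
      rw [Real.exp_lt_one_iff]
      have := hx l; nlinarith
    linarith
  obtain ⟨F, hF⟩ : ∃ F : ℤ → ℝ, F = fun l =>
      Real.log ((1 - Real.exp (-s * 2 ^ l)) / (1 - Real.exp (-lam * 2 ^ l))) := ⟨_, rfl⟩
  have hhpos : ∀ l : ℤ, 0 < (1 - Real.exp (-s * 2 ^ l)) / (1 - Real.exp (-lam * 2 ^ l)) :=
    fun l => div_pos (hden s hspos l) (hden lam hlam l)
  -- key identity
  have key : ∀ l : ℤ,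
      Real.exp (F (l + 1) - F l) =
        (Real.exp (lam * 2 ^ l) + Real.exp (-t * 2 ^ l)) / (1 + Real.exp (lam * 2 ^ l)) := by
    intro l
    rw [Real.exp_sub, hF, Real.exp_log (hhpos (l + 1)), Real.exp_log (hhpos l)]
    set u := Real.exp (-lam * 2 ^ l) with hu
    set w := Real.exp (-s * 2 ^ l) with hw
    have hupos : 0 < u := Real.exp_pos _
    have hu2 : Real.exp (-lam * 2 ^ (l + 1)) = u ^ 2 := by
      rw [hu, ← Real.exp_nat_mul]
      congr 1
      rw [zpow_add_one₀ (two_ne_zero)]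
      push_cast; ring
    have hw2 : Real.exp (-s * 2 ^ (l + 1)) = w ^ 2 := by
      rw [hw, ← Real.exp_nat_mul]
      congr 1
      rw [zpow_add_one₀ (two_ne_zero)]
      push_cast; ring
    have hinv : Real.exp (lam * 2 ^ l) = u⁻¹ := by
      rw [hu, ← Real.exp_neg]; ring_nf
    have htw : Real.exp (-t * 2 ^ l) = w / u := by
      rw [hw, hu, ← Real.exp_sub]; congr 1; rw [hs]; ring
    have h1 : 1 - u ≠ 0 := by have := hden lam hlam l; rw [← hu] at this; linarith
    have h2 : 1 - w ≠ 0 := by have := hden s hspos l; rw [← hw] at this; linarith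
    have h4 : u ≠ 0 := ne_of_gt hupos
    rw [hu2, hw2, hinv, htw]
    rw [show 1-w^2 = (1-w)*(1+w) by ring, show 1-u^2=(1-u)*(1+u) by ring]
    rw [div_div_div_comm, mul_div_cancel_left₀ _ h2, mul_div_cancel_left₀ _ h1]
    rw [show u⁻¹ + w/u = (1+w)/u by field_simp; try ring,
      show 1+u⁻¹ = (1+u)/u by field_simp; try ring]
    rw [div_div_div_comm, div_self h4, div_one]
  -- limit at +∞
  have hlim1 : Filter.Tendsto (fun n : ℕ => F n) Filter.atTop (nhds 0) := by
    rw [hF]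
    have hexp : ∀ c : ℝ, 0 < c →
        Filter.Tendsto (fun n : ℕ => Real.exp (-c * 2 ^ (n:ℤ))) Filter.atTop (nhds 0) := by
      intro c hc
      apply Real.tendsto_exp_atBot.comp
      have h2 : Filter.Tendsto (fun n : ℕ => ((2:ℝ) ^ (n:ℤ))) Filter.atTop Filter.atTop := by
        simpa [zpow_natCast] using tendsto_pow_atTop_atTop_of_one_lt (one_lt_two (α := ℝ))
      have := tendsto_neg_atBot_iff.mpr (h2.const_mul_atTop hc)
      exact this.congr fun n => by ring
    have hmain : Filter.Tendsto (fun n : ℕ =>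
        (1 - Real.exp (-s * 2 ^ (n:ℤ))) / (1 - Real.exp (-lam * 2 ^ (n:ℤ)))) Filter.atTop
        (nhds (((1:ℝ) - 0) / (1 - 0))) :=
      ((tendsto_const_nhds.sub (hexp s hspos)).div
        (tendsto_const_nhds.sub (hexp lam hlam)) (by norm_num))
    have hcomp := (Real.continuousAt_log
      (by norm_num : ((1:ℝ) - 0)/(1 - 0) ≠ 0)).tendsto.comp hmain
    rw [show Real.log (((1:ℝ) - 0) / (1 - 0)) = 0 by norm_num] at hcomp
    exact hcomp
  -- limit at -∞
  have hlim2 : Filter.Tendsto (fun n : ℕ => F (-n)) Filter.atTop (nhds (Real.log (s / lam))) := by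
    rw [hF]
    have hxseq : Filter.Tendsto (fun n : ℕ => ((2:ℝ) ^ (-(n:ℤ)))) Filter.atTop
        (nhdsWithin 0 {(0:ℝ)}ᶜ) := by
      apply tendsto_nhdsWithin_of_tendsto_nhds_of_eventually_within
      · have h : Filter.Tendsto (fun n : ℕ => ((2:ℝ)⁻¹) ^ n) Filter.atTop (nhds 0) :=
          tendsto_pow_atTop_nhds_zero_of_lt_one (by norm_num) (by norm_num)
        refine h.congr fun n => ?_
        rw [zpow_neg, zpow_natCast, inv_pow]
      · filter_upwards with n
        exact ne_of_gt (hx (-(n:ℤ)))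
    have hratio : Filter.Tendsto (fun n : ℕ =>
        (1 - Real.exp (-s * 2 ^ (-(n:ℤ)))) / (1 - Real.exp (-lam * 2 ^ (-(n:ℤ))))) Filter.atTop
        (nhds (s / lam)) := by
      have hs' := (slope_lim s).comp hxseq
      have hl' := (slope_lim lam).comp hxseq
      have h := hs'.div hl' (ne_of_gt hlam)
      refine h.congr fun n => ?_
      have hxne : ((2:ℝ) ^ (-(n:ℤ))) ≠ 0 := ne_of_gt (hx _)
      simp only [Pi.div_apply, Function.comp_apply]
      rw [div_div_div_comm, div_self hxne, div_one]
    have hcomp := (Real.continuousAt_log (ne_of_gt (div_pos hspos hlam))).tendsto.comp hratio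
    exact hcomp
  -- monotonicity
  have hfle : ∀ l : ℤ, F (l + 1) ≤ F l := by
    intro l
    have h1 : Real.exp (F (l + 1) - F l) ≤ 1 := by
      rw [key l]
      have h2 : Real.exp (-t * 2 ^ l) ≤ 1 := by
        rw [Real.exp_le_one_iff]
        have := hx l; nlinarith
      have h3 : (0:ℝ) < 1 + Real.exp (lam * 2 ^ l) := by positivity
      rw [div_le_one h3]
      linarith
    have := Real.exp_le_one_iff.mp h1
    linarith
  obtain ⟨g, hg⟩ : ∃ g : ℤ → ℝ, g = fun l => F (l + 1) - F l := ⟨_, rfl⟩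
  have hnat : HasSum (fun n : ℕ => g n) (-F 0) := by
    have h := tele_hasSum (fun n => -F n) (-0)
      (fun n => by have := hfle n; push_cast; linarith) (hlim1.neg)
    have h2 := h.neg
    have h3 : HasSum (fun n : ℕ => g n) (-(-0 - -F 0)) :=
      h2.congr_fun fun n => by simp only [hg]; push_cast; ring
    simpa using h3
  have hneg : HasSum (fun n : ℕ => g (-(n + 1))) (F 0 - Real.log (s / lam)) := by
    have h := tele_hasSum (fun n => F (-n)) (Real.log (s / lam))
      (fun n => by
        have h1 := hfle (-(n + 1 : ℤ))
        have he : (-(n + 1 : ℤ) + 1) = -(n : ℤ) := by ring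
        rw [he] at h1
        push_cast
        convert h1 using 2)
      hlim2
    have h2 := h.neg
    have h3 : HasSum (fun n : ℕ => g (-(n + 1))) (-(Real.log (s / lam) - F (-(0:ℕ)))) := by
      refine h2.congr_fun fun n => ?_
      have he : (-(n + 1 : ℤ) + 1) = -(n : ℤ) := by ring
      simp only [hg, he]
      have e1 : (-((n:ℤ) + 1)) = (-(((n:ℕ)+1:ℕ)):ℤ) := by push_cast; ring
      rw [e1]
      ring
    simpa using h3
  have htotal : HasSum g (Real.log (lam / s)) := by
    have h := HasSum.of_nat_of_neg_add_one hnat hneg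
    have he : -F 0 + (F 0 - Real.log (s / lam)) = Real.log (lam / s) := by
      rw [show lam / s = (s / lam)⁻¹ by rw [inv_div], Real.log_inv]
      ring
    rwa [he] at h
  have hprod : HasProd (fun l : ℤ =>
      (Real.exp (lam * 2 ^ l) + Real.exp (-t * 2 ^ l)) / (1 + Real.exp (lam * 2 ^ l)))
      (lam / s) := by
    have h := htotal.rexp
    rw [Real.exp_log (div_pos hlam hspos)] at h
    refine h.congr_fun fun l => ?_
    show _ = Real.exp (g l)
    rw [hg]
    exact (key l).symm
  exact ⟨hprod.multipliable, hprod.tprod_eq⟩
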